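/- If a vertex x of degree 2 in a graph G lies on a cycle of G, then eliminating x first extends to a minimum fill-in ordering of G: Φ(G) = |D_G(x)| + Φ(G_x). -/

import Mathlib

open SimpleGraph

attribute [local instance] Classical.propDecidable

variable {V : Type*} [Fintype V] [DecidableEq V]

/-- The elimination graph `G_x`: delete `x` and complete its neighborhood to a clique.
(The eliminated vertex is kept as an isolated vertex.) -/
def elimG (G : SimpleGraph V) (x : V) : SimpleGraph V where
  Adj u v := u ≠ v ∧ u ≠ x ∧ v ≠ x ∧ (G.Adj u v ∨ (G.Adj x u ∧ G.Adj x v))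
  symm := by
    constructor
    intro u v h
    obtain ⟨h1, h2, h3, h4⟩ := h
    refine ⟨h1.symm, h3, h2, ?_⟩
    rcases h4 with h | ⟨h4, h5⟩
    · exact Or.inl h.symm
    · exact Or.inr ⟨h5, h4⟩
  loopless := by constructor; intro v h; exact h.1 rfl

/-- The deficiency `D(x)`: the set of unordered pairs of distinct, non-adjacent
neighbors of `x`. -/
noncomputable def deficiencyFinset (G : SimpleGraph V) (x : V) : Finset (Sym2 V) :=
  ((Finset.univ ×ˢ Finset.univ : Finset (V × V)).filter
    (fun p => p.1 ≠ p.2 ∧ G.Adj x p.1 ∧ G.Adj x p.2 ∧ ¬ G.Adj p.1 p.2)).image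
    (fun p => s(p.1, p.2))

/-- Successive elimination of a list of vertices. -/
def elimList : SimpleGraph V → List V → SimpleGraph V
  | G, [] => G
  | G, x :: xs => elimList (elimG G x) xs

/-- The fill-in of an elimination ordering given as a list: the total number of
edges added during the elimination process. -/
noncomputable def fillList : SimpleGraph V → List V → ℕ
  | _, [] => 0
  | G, x :: xs => (deficiencyFinset G x).card + fillList (elimG G x) xs

/-- The set of fill edges added during the elimination process. -/
noncomputable def fillEdges : SimpleGraph V → List V → Finset (Sym2 V)
  | _, [] => ∅
  | G, x :: xs => deficiencyFinset G x ∪ fillEdges (elimG G x) xs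

/-- A list is an (elimination) ordering if it enumerates every vertex exactly once. -/
def IsOrdering (L : List V) : Prop := L.Nodup ∧ ∀ v : V, v ∈ L

/-- The minimum fill-in `Φ(G)`. -/
noncomputable def minFillIn (G : SimpleGraph V) : ℕ :=
  sInf {n | ∃ L : List V, IsOrdering L ∧ fillList G L = n}

/-- A vertex is simplicial if its neighborhood is a clique. -/
def IsSimplicial (G : SimpleGraph V) (x : V) : Prop :=
  ∀ a b, G.Adj x a → G.Adj x b → a ≠ b → G.Adj a b

/-- `a` and `b` are indistinguishable: equal closed neighborhoods. -/
def Indistinguishable (G : SimpleGraph V) (a b : V) : Prop :=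
  a ≠ b ∧ insert a (G.neighborSet a) = insert b (G.neighborSet b)

/-- `a` and `b` are twins: equal open neighborhoods (hence non-adjacent). -/
def Twins (G : SimpleGraph V) (a b : V) : Prop :=
  a ≠ b ∧ G.neighborSet a = G.neighborSet b

/-- Chordality: no induced cycle of length at least 4, equivalently every cycle of
length at least 4 has a chord. -/
def IsChordal (G : SimpleGraph V) : Prop :=
  ∀ n : ℕ, 4 ≤ n → ∀ f : ZMod n → V, Function.Injective f →
    ¬ (∀ i j : ZMod n, G.Adj (f i) (f j) ↔ (j = i + 1 ∨ i = j + 1))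

/-- `T` is a triangulation of `G`: a set of non-edges whose addition makes `G` chordal. -/
def IsTriangulation (G : SimpleGraph V) (T : Finset (Sym2 V)) : Prop :=
  (∀ e ∈ T, ¬ e.IsDiag ∧ e ∉ G.edgeSet) ∧
    IsChordal (G ⊔ SimpleGraph.fromEdgeSet (↑T : Set (Sym2 V)))

/-- A minimum triangulation. -/
def IsMinTriangulation (G : SimpleGraph V) (T : Finset (Sym2 V)) : Prop :=
  IsTriangulation G T ∧ ∀ T' : Finset (Sym2 V), IsTriangulation G T' → T.card ≤ T'.card

/-- The graph obtained from `G` by deleting the vertices in `S`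
(deleted vertices are kept as isolated vertices). -/
def deleteSet (G : SimpleGraph V) (S : Set V) : SimpleGraph V where
  Adj u v := G.Adj u v ∧ u ∉ S ∧ v ∉ S
  symm := ⟨fun _ _ ⟨h, hu, hv⟩ => ⟨h.symm, hv, hu⟩⟩
  loopless := ⟨fun v h => G.irrefl h.1⟩

set_option linter.unusedSectionVars false
section Aux
variable {V : Type*} [Fintype V] [DecidableEq V]

lemma elimG_adj (K : SimpleGraph V) (x u v : V) :
    (elimG K x).Adj u v ↔ u ≠ v ∧ u ≠ x ∧ v ≠ x ∧ (K.Adj u v ∨ (K.Adj x u ∧ K.Adj x v)) :=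
  Iff.rfl

/-- An isolated vertex. -/
def Isol (K : SimpleGraph V) (x : V) : Prop := ∀ u, ¬ K.Adj x u

lemma isol_elimG_self (K : SimpleGraph V) (x : V) : Isol (elimG K x) x := by
  intro u h; exact h.2.1 rfl

lemma isol_elimG (K : SimpleGraph V) {x : V} (h : Isol K x) (y : V) :
    Isol (elimG K y) x := by
  intro u hu
  rcases hu.2.2.2 with h1 | ⟨h1, h2⟩
  · exact h u h1
  · exact h y h1.symm

lemma elimG_of_isol {K : SimpleGraph V} {x : V} (h : Isol K x) : elimG K x = K := by
  ext u v
  rw [elimG_adj]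
  constructor
  · rintro ⟨-, -, -, h4⟩
    rcases h4 with h4 | ⟨h4, -⟩
    · exact h4
    · exact absurd h4 (h u)
  · intro huv
    exact ⟨huv.ne, fun e => h v (e ▸ huv), fun e => h u (e ▸ huv.symm), Or.inl huv⟩

lemma mem_deficiencyFinset {K : SimpleGraph V} {x : V} {e : Sym2 V} :
    e ∈ deficiencyFinset K x ↔
      ∃ u v, u ≠ v ∧ K.Adj x u ∧ K.Adj x v ∧ ¬ K.Adj u v ∧ e = s(u, v) := by
  unfold deficiencyFinset
  simp only [Finset.mem_image, Finset.mem_filter, Finset.mem_product, Finset.mem_univ,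
    true_and, Prod.exists]
  constructor
  · rintro ⟨u, v, ⟨h1, h2, h3, h4⟩, h5⟩
    exact ⟨u, v, h1, h2, h3, h4, h5.symm⟩
  · rintro ⟨u, v, h1, h2, h3, h4, h5⟩
    exact ⟨u, v, ⟨h1, h2, h3, h4⟩, h5.symm⟩

lemma deficiencyFinset_of_isol {K : SimpleGraph V} {x : V} (h : Isol K x) :
    deficiencyFinset K x = ∅ := by
  ext e
  simp only [mem_deficiencyFinset, Finset.notMem_empty, iff_false]
  rintro ⟨u, v, -, h2, -, -, -⟩
  exact h u h2

lemma fillList_cons (K : SimpleGraph V) (y : V) (M : List V) :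
    fillList K (y :: M) = (deficiencyFinset K y).card + fillList (elimG K y) M := rfl

lemma fillList_append (K : SimpleGraph V) (M R : List V) :
    fillList K (M ++ R) = fillList K M + fillList (elimList K M) R := by
  induction M generalizing K with
  | nil => simp [fillList, elimList]
  | cons y M ih => simp [fillList, elimList, ih, Nat.add_assoc]

lemma isol_elimList {K : SimpleGraph V} {x : V} (h : Isol K x) (M : List V) :
    Isol (elimList K M) x := by
  induction M generalizing K with
  | nil => exact h
  | cons y M ih => exact ih (isol_elimG K h y)

lemma fillList_of_isol {K : SimpleGraph V} {R : List V} (h : ∀ v ∈ R, Isol K v) :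
    fillList K R = 0 := by
  induction R generalizing K with
  | nil => rfl
  | cons y R ih =>
    have hy : Isol K y := h y (by simp)
    rw [fillList_cons, deficiencyFinset_of_isol hy, elimG_of_isol hy, Finset.card_empty, Nat.zero_add]
    exact ih (fun v hv => h v (by simp [hv]))

lemma fillList_erase_of_isol {K : SimpleGraph V} {x : V} (h : Isol K x) (M : List V) :
    fillList K (M.erase x) = fillList K M := by
  induction M generalizing K with
  | nil => rfl
  | cons y M ih =>
    by_cases hyx : y = x
    · subst hyx
      rw [List.erase_cons_head, fillList_cons, deficiencyFinset_of_isol h,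
        elimG_of_isol h, Finset.card_empty, Nat.zero_add]
    · rw [List.erase_cons_tail (by simpa using hyx), fillList_cons, fillList_cons,
        ih (isol_elimG K h y)]

lemma exists_ordering (V : Type*) [Fintype V] [DecidableEq V] :
    ∃ L : List V, IsOrdering L :=
  ⟨Finset.univ.toList, Finset.nodup_toList _, fun v => by simp⟩

lemma minFillIn_le {K : SimpleGraph V} {L : List V} (hL : IsOrdering L) :
    minFillIn K ≤ fillList K L :=
  Nat.sInf_le ⟨L, hL, rfl⟩

lemma minFillIn_spec (K : SimpleGraph V) :
    ∃ L : List V, IsOrdering L ∧ fillList K L = minFillIn K := by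
  obtain ⟨L, hL⟩ := exists_ordering V
  have : minFillIn K ∈ {n | ∃ L : List V, IsOrdering L ∧ fillList K L = n} :=
    Nat.sInf_mem ⟨_, L, hL, rfl⟩
  exact this

/-- Padding: extend a nodup list, whose missing vertices are all isolated,
to a full ordering with the same fill. -/
lemma minFillIn_le_fillList_of_pad {K : SimpleGraph V} {M : List V} (hnd : M.Nodup)
    (hiso : ∀ v, v ∉ M → Isol K v) :
    minFillIn K ≤ fillList K M := by
  classical
  set R := (Finset.univ.filter (fun v => v ∉ M)).toList with hR
  have hord : IsOrdering (M ++ R) := by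
    constructor
    · rw [List.nodup_append]
      refine ⟨hnd, Finset.nodup_toList _, ?_⟩
      intro a ha c hb hac
      subst hac
      have : a ∉ M := by
        have := (Finset.mem_toList).1 hb
        simpa using (Finset.mem_filter.1 this).2
      exact this ha
    · intro v
      by_cases hv : v ∈ M
      · exact List.mem_append.2 (Or.inl hv)
      · exact List.mem_append.2 (Or.inr (by simp [hR, hv]))
  have : fillList K (M ++ R) = fillList K M := by
    rw [fillList_append]
    have h0 : fillList (elimList K M) R = 0 := by
      refine fillList_of_isol ?_
      intro v hv
      have hvM : v ∉ M := by
        have := (Finset.mem_toList).1 hv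
        simpa using (Finset.mem_filter.1 this).2
      exact isol_elimList (hiso v hvM) M
    omega
  calc minFillIn K ≤ fillList K (M ++ R) := minFillIn_le hord
  _ = fillList K M := this

end Aux
section Aux2
set_option linter.unusedSectionVars false
set_option maxHeartbeats 1000000
variable {V : Type*} [Fintype V] [DecidableEq V]

lemma elimG_comm (K : SimpleGraph V) (x y : V) :
    elimG (elimG K y) x = elimG (elimG K x) y := by
  by_cases hxy : x = y
  · subst hxy; rfl
  · have hyx : y ≠ x := Ne.symm hxy
    have hcomm := K.adj_comm x y
    ext u v
    simp only [elimG_adj]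
    constructor
    · rintro ⟨h1, h2, h3, (⟨h4, h5, h6⟩ | ⟨⟨h4, h5, h6, h7⟩, ⟨h8, h9, h10, h11⟩⟩)⟩ <;>
        tauto
    · rintro ⟨h1, h2, h3, (⟨h4, h5, h6⟩ | ⟨⟨h4, h5, h6, h7⟩, ⟨h8, h9, h10, h11⟩⟩)⟩ <;>
        tauto

lemma elimG_mono {K K' : SimpleGraph V} (h : K ≤ K') (y : V) :
    elimG K y ≤ elimG K' y := by
  intro u v hu
  obtain ⟨h1, h2, h3, h4⟩ := hu
  refine ⟨h1, h2, h3, ?_⟩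
  rcases h4 with h4 | ⟨h4, h5⟩
  · exact Or.inl (h h4)
  · exact Or.inr ⟨h h4, h h5⟩

lemma mem_edgeFinset_iff (K : SimpleGraph V) (u v : V) :
    s(u, v) ∈ K.edgeFinset ↔ K.Adj u v := by
  rw [SimpleGraph.mem_edgeFinset, SimpleGraph.mem_edgeSet]

/-- Key monotonicity: fill along a fixed list exceeds fill of a supergraph minus
the number of extra edges. -/
lemma fillList_le_of_le {K K' : SimpleGraph V} (h : K ≤ K') (M : List V) :
    fillList K M ≤ fillList K' M + (K'.edgeFinset \ K.edgeFinset).card := by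
  induction M generalizing K K' with
  | nil => simp [fillList]
  | cons y M ih =>
    rw [fillList_cons, fillList_cons]
    have hmono := elimG_mono h y
    have key : (deficiencyFinset K y).card +
        ((elimG K' y).edgeFinset \ (elimG K y).edgeFinset).card ≤
        (deficiencyFinset K' y).card + (K'.edgeFinset \ K.edgeFinset).card := by
      set D := deficiencyFinset K y with hD
      set D' := deficiencyFinset K' y with hD'
      set Δ := K'.edgeFinset \ K.edgeFinset with hΔ
      set Δ' := (elimG K' y).edgeFinset \ (elimG K y).edgeFinset with hΔ'
      have hc1 : Δ' \ Δ ⊆ D' \ D := by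
        intro e he
        rw [Finset.mem_sdiff] at he
        obtain ⟨he1, he2⟩ := he
        rw [hΔ', Finset.mem_sdiff] at he1
        obtain ⟨heK', heK⟩ := he1
        induction e using Sym2.ind with
        | _ u v =>
        rw [mem_edgeFinset_iff] at heK' heK
        obtain ⟨h1, h2, h3, h4⟩ := heK'
        have hadj' : ¬ K'.Adj u v := by
          intro hA
          have hK : K.Adj u v := by
            by_contra hK
            exact he2 (by
              rw [hΔ, Finset.mem_sdiff, mem_edgeFinset_iff, mem_edgeFinset_iff]
              exact ⟨hA, hK⟩)
          exact heK ⟨h1, h2, h3, Or.inl hK⟩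
        rcases h4 with h4 | ⟨h4, h5⟩
        · exact absurd h4 hadj'
        rw [Finset.mem_sdiff]
        constructor
        · rw [hD', mem_deficiencyFinset]
          exact ⟨u, v, h1, h4, h5, hadj', rfl⟩
        · rw [hD, mem_deficiencyFinset]
          rintro ⟨u', v', hne, ha1, ha2, ha3, heq⟩
          have hadj2 : (elimG K y).Adj u' v' :=
            ⟨hne, (K.ne_of_adj ha1).symm, (K.ne_of_adj ha2).symm, Or.inr ⟨ha1, ha2⟩⟩
          rcases Sym2.eq_iff.1 heq with ⟨rfl, rfl⟩ | ⟨rfl, rfl⟩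
          · exact heK hadj2
          · exact heK hadj2.symm
      have hc2 : D \ D' ⊆ Δ \ Δ' := by
        intro e he
        rw [Finset.mem_sdiff] at he
        obtain ⟨heD, heD'⟩ := he
        rw [hD, mem_deficiencyFinset] at heD
        obtain ⟨u, v, h1, h2, h3, h4, h5⟩ := heD
        subst h5
        have hadj' : K'.Adj u v := by
          by_contra hA
          exact heD' (by
            rw [hD', mem_deficiencyFinset]
            exact ⟨u, v, h1, h h2, h h3, hA, rfl⟩)
        rw [Finset.mem_sdiff]
        constructor
        · rw [hΔ, Finset.mem_sdiff, mem_edgeFinset_iff, mem_edgeFinset_iff]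
          exact ⟨hadj', h4⟩
        · rw [hΔ', Finset.mem_sdiff]
          rintro ⟨-, hnot⟩
          exact hnot ((mem_edgeFinset_iff _ _ _).2
            ⟨h1, (K.ne_of_adj h2).symm, (K.ne_of_adj h3).symm, Or.inr ⟨h2, h3⟩⟩)
      have i1 : (Δ' \ Δ).card ≤ (D' \ D).card := Finset.card_le_card hc1
      have i2 : (D \ D').card ≤ (Δ \ Δ').card := Finset.card_le_card hc2
      have e1 : D.card = (D ∩ D').card + (D \ D').card := (Finset.card_inter_add_card_sdiff _ _).symm
      have e2 : D'.card = (D' ∩ D).card + (D' \ D).card := (Finset.card_inter_add_card_sdiff _ _).symm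
      have e3 : Δ.card = (Δ ∩ Δ').card + (Δ \ Δ').card := (Finset.card_inter_add_card_sdiff _ _).symm
      have e4 : Δ'.card = (Δ' ∩ Δ).card + (Δ' \ Δ).card := (Finset.card_inter_add_card_sdiff _ _).symm
      have e5 : (D ∩ D').card = (D' ∩ D).card := by rw [Finset.inter_comm]
      have e6 : (Δ ∩ Δ').card = (Δ' ∩ Δ).card := by rw [Finset.inter_comm]
      omega
    have ihh := ih hmono
    omega

end Aux2
section Aux3
set_option linter.unusedSectionVars false
variable {V : Type*} [Fintype V] [DecidableEq V]

/-- Pullback of a graph along a permutation. -/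
def permGraph (σ : V ≃ V) (K : SimpleGraph V) : SimpleGraph V where
  Adj u v := K.Adj (σ u) (σ v)
  symm := ⟨fun _ _ h => h.symm⟩
  loopless := ⟨fun v h => K.irrefl h⟩

lemma permGraph_adj (σ : V ≃ V) (K : SimpleGraph V) (u v : V) :
    (permGraph σ K).Adj u v ↔ K.Adj (σ u) (σ v) := Iff.rfl

lemma permGraph_elimG (σ : V ≃ V) (K : SimpleGraph V) (y : V) :
    elimG (permGraph σ K) y = permGraph σ (elimG K (σ y)) := by
  ext u v
  simp only [elimG_adj, permGraph_adj]
  simp only [σ.injective.ne_iff]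

lemma permGraph_deficiency (σ : V ≃ V) (K : SimpleGraph V) (y : V) :
    (deficiencyFinset (permGraph σ K) y).card = (deficiencyFinset K (σ y)).card := by
  have himg : deficiencyFinset K (σ y) = (deficiencyFinset (permGraph σ K) y).image
      (Sym2.map σ) := by
    ext e
    simp only [Finset.mem_image, mem_deficiencyFinset]
    constructor
    · rintro ⟨u, v, h1, h2, h3, h4, rfl⟩
      refine ⟨s(σ.symm u, σ.symm v), ⟨σ.symm u, σ.symm v, ?_, ?_, ?_, ?_, rfl⟩, ?_⟩
      · exact fun hc => h1 (by simpa using congrArg σ hc)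
      · simpa [permGraph_adj] using h2
      · simpa [permGraph_adj] using h3
      · simpa [permGraph_adj] using h4
      · simp [Sym2.map_pair_eq]
    · rintro ⟨e', ⟨u, v, h1, h2, h3, h4, rfl⟩, rfl⟩
      exact ⟨σ u, σ v, σ.injective.ne h1, h2, h3, h4, by simp [Sym2.map_pair_eq]⟩
  rw [himg, Finset.card_image_of_injective _ (Sym2.map.injective σ.injective)]

lemma permGraph_fillList (σ : V ≃ V) (K : SimpleGraph V) (M : List V) :
    fillList (permGraph σ K) M = fillList K (M.map σ) := by
  induction M generalizing K with
  | nil => rfl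
  | cons y M ih =>
    rw [List.map_cons, fillList_cons, fillList_cons, permGraph_deficiency,
      permGraph_elimG, ih]

lemma permGraph_minFillIn (σ : V ≃ V) (K : SimpleGraph V) :
    minFillIn (permGraph σ K) = minFillIn K := by
  have key : ∀ (σ : V ≃ V) (K : SimpleGraph V), minFillIn K ≤ minFillIn (permGraph σ K) := by
    intro σ K
    obtain ⟨L, hL, hfill⟩ := minFillIn_spec (permGraph σ K)
    have hord : IsOrdering (L.map σ) := by
      constructor
      · exact hL.1.map σ.injective
      · intro v
        rcases hL.2 (σ.symm v) with hv
        exact List.mem_map.2 ⟨σ.symm v, hv, by simp⟩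
    calc minFillIn K ≤ fillList K (L.map σ) := minFillIn_le hord
      _ = fillList (permGraph σ K) L := (permGraph_fillList σ K L).symm
      _ = minFillIn (permGraph σ K) := hfill
  refine le_antisymm ?_ (key σ K)
  have h2 := key σ.symm (permGraph σ K)
  have : permGraph σ.symm (permGraph σ K) = K := by
    ext u v; simp [permGraph_adj]
  rwa [this] at h2

end Aux3
section Aux4
set_option linter.unusedSectionVars false
variable {V : Type*} [Fintype V] [DecidableEq V]

lemma walk_bypass {K : SimpleGraph V} {y x : V} :
    ∀ n {s t : V} (W : K.Walk s t), W.length ≤ n → x ∉ W.support → s ≠ y → t ≠ y →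
    ∃ W' : (elimG K y).Walk s t, x ∉ W'.support := by
  intro n
  induction n with
  | zero =>
    intro s t W hlen hx hs ht
    cases W with
    | nil => exact ⟨SimpleGraph.Walk.nil, by simpa using hx⟩
    | cons h W' => simp [SimpleGraph.Walk.length_cons] at hlen
  | succ n ih =>
    intro s t W hlen hx hs ht
    cases W with
    | nil => exact ⟨SimpleGraph.Walk.nil, by simpa using hx⟩
    | @cons _ u _ h W' =>
      have hxs : x ≠ s := by
        intro hc; subst hc; exact hx (SimpleGraph.Walk.start_mem_support _)
      have hxW' : x ∉ W'.support := by
        intro hc; exact hx (by simp [SimpleGraph.Walk.support_cons, hc])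
      by_cases huy : u = y
      · subst huy
        cases W' with
        | nil => exact absurd rfl ht
        | @cons _ u' _ h2 W2 =>
          have hu'y : u' ≠ u := (K.ne_of_adj h2).symm
          have hxW2 : x ∉ W2.support := by
            intro hc; exact hxW' (by simp [SimpleGraph.Walk.support_cons, hc])
          have hlen2 : W2.length ≤ n := by
            simp [SimpleGraph.Walk.length_cons] at hlen; omega
          by_cases hsu' : s = u'
          · subst hsu'
            exact ih W2 hlen2 hxW2 hs ht
          · have hedge : (elimG K u).Adj s u' := ⟨hsu', hs, hu'y, Or.inr ⟨h.symm, h2⟩⟩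
            obtain ⟨W'', hW''⟩ := ih W2 hlen2 hxW2 hu'y ht
            refine ⟨SimpleGraph.Walk.cons hedge W'', ?_⟩
            simp only [SimpleGraph.Walk.support_cons, List.mem_cons]
            rintro (hc | hc)
            · exact hxs hc
            · exact hW'' hc
      · have hedge : (elimG K y).Adj s u := ⟨K.ne_of_adj h, hs, huy, Or.inl h⟩
        have hlen2 : W'.length ≤ n := by
          simp [SimpleGraph.Walk.length_cons] at hlen; omega
        obtain ⟨W'', hW''⟩ := ih W' hlen2 hxW' huy ht
        refine ⟨SimpleGraph.Walk.cons hedge W'', ?_⟩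
        simp only [SimpleGraph.Walk.support_cons, List.mem_cons]
        rintro (hc | hc)
        · exact hxs hc
        · exact hW'' hc

/-- Connectivity of `a` and `b` avoiding `x`. -/
def ConnAvoid (K : SimpleGraph V) (x a b : V) : Prop :=
  ∃ p : K.Walk a b, x ∉ p.support

lemma connAvoid_elimG {K : SimpleGraph V} {x a b : V} (h : ConnAvoid K x a b)
    {y : V} (hya : y ≠ a) (hyb : y ≠ b) : ConnAvoid (elimG K y) x a b := by
  obtain ⟨p, hp⟩ := h
  obtain ⟨W', hW'⟩ := walk_bypass (y := y) (x := x) p.length p le_rfl hp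
    (Ne.symm hya) (Ne.symm hyb)
  exact ⟨W', hW'⟩

lemma connAvoid_symm {K : SimpleGraph V} {x a b : V} (h : ConnAvoid K x a b) :
    ConnAvoid K x b a := by
  obtain ⟨p, hp⟩ := h
  exact ⟨p.reverse, by simpa using hp⟩

/-- From a walk ending at `x` with nodup support, extract the last edge. -/
lemma last_edge_extract {K : SimpleGraph V} {x : V} :
    ∀ n, ∀ {u : V} (p : K.Walk u x), p.length ≤ n → p.support.Nodup → u ≠ x →
    ∃ v, ∃ q : K.Walk u v, x ∉ q.support ∧ K.Adj v x ∧ s(v, x) ∈ p.edges := by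
  intro n
  induction n with
  | zero =>
    intro u p hlen hnd hux
    cases p with
    | nil => exact absurd rfl hux
    | cons h2 p2 => simp [SimpleGraph.Walk.length_cons] at hlen
  | succ n ih =>
    intro u p hlen hnd hux
    cases p with
    | nil => exact absurd rfl hux
    | @cons _ m _ h2 p2 =>
      have hnd2 : p2.support.Nodup := by
        rw [SimpleGraph.Walk.support_cons] at hnd; exact hnd.of_cons
      have hlen2 : p2.length ≤ n := by
        simp [SimpleGraph.Walk.length_cons] at hlen; omega
      by_cases hmx : m = x
      · subst hmx
        refine ⟨u, SimpleGraph.Walk.nil, by simpa using (Ne.symm hux), h2, ?_⟩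
        simp [SimpleGraph.Walk.edges_cons]
      · obtain ⟨v, q, hq1, hq2, hq3⟩ := ih p2 hlen2 hnd2 hmx
        refine ⟨v, SimpleGraph.Walk.cons h2 q, ?_, hq2, ?_⟩
        · simp only [SimpleGraph.Walk.support_cons, List.mem_cons]
          rintro (hc | hc)
          · exact hux hc.symm
          · exact hq1 hc
        · simp [SimpleGraph.Walk.edges_cons, hq3]

/-- From a cycle through `x`, extract two distinct neighbors of `x` connected
avoiding `x`. -/
lemma cycle_extract {K : SimpleGraph V} {x : V} (w : K.Walk x x) (hw : w.IsCycle) :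
    ∃ u v, u ≠ v ∧ K.Adj x u ∧ K.Adj x v ∧ ConnAvoid K x u v := by
  cases w with
  | nil => exact absurd rfl hw.ne_nil
  | @cons _ u _ h p =>
    have hnd : p.support.Nodup := by
      have := hw.support_nodup
      rwa [SimpleGraph.Walk.support_cons, List.tail_cons] at this
    have hux : u ≠ x := (K.ne_of_adj h).symm
    obtain ⟨v, q, hq1, hq2, hq3⟩ := last_edge_extract p.length p le_rfl hnd hux
    have hedges : (SimpleGraph.Walk.cons h p).edges.Nodup := hw.edges_nodup
    rw [SimpleGraph.Walk.edges_cons] at hedges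
    have huv : u ≠ v := by
      rintro rfl
      have : s(x, u) = s(u, x) := Sym2.eq_swap
      exact (List.nodup_cons.1 hedges).1 (this ▸ hq3)
    exact ⟨u, v, huv, h, hq2.symm, ⟨q, hq1⟩⟩

lemma degree_two_neighbors {K : SimpleGraph V} {x : V} (h : K.degree x = 2) :
    ∃ a b, a ≠ b ∧ ∀ u, K.Adj x u ↔ u = a ∨ u = b := by
  rw [← SimpleGraph.card_neighborFinset_eq_degree] at h
  obtain ⟨a, b, hab, hset⟩ := Finset.card_eq_two.1 h
  refine ⟨a, b, hab, fun u => ?_⟩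
  rw [← SimpleGraph.mem_neighborFinset, hset]
  simp

lemma deficiency_deg2 {K : SimpleGraph V} {x a b : V} (hab : a ≠ b)
    (hN : ∀ u, K.Adj x u ↔ u = a ∨ u = b) :
    deficiencyFinset K x = if K.Adj a b then ∅ else {s(a, b)} := by
  ext e
  rw [mem_deficiencyFinset]
  by_cases hAB : K.Adj a b
  · simp only [if_pos hAB, Finset.notMem_empty, iff_false]
    rintro ⟨u, v, h1, h2, h3, h4, rfl⟩
    rcases (hN u).1 h2 with rfl | rfl <;> rcases (hN v).1 h3 with rfl | rfl
    · exact h1 rfl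
    · exact h4 hAB
    · exact h4 hAB.symm
    · exact h1 rfl
  · simp only [if_neg hAB, Finset.mem_singleton]
    constructor
    · rintro ⟨u, v, h1, h2, h3, h4, rfl⟩
      rcases (hN u).1 h2 with rfl | rfl <;> rcases (hN v).1 h3 with rfl | rfl
      · exact absurd rfl h1
      · rfl
      · exact Sym2.eq_swap
      · exact absurd rfl h1
    · rintro rfl
      exact ⟨a, b, hab, (hN a).2 (Or.inl rfl), (hN b).2 (Or.inr rfl), hAB, rfl⟩

lemma deficiency_deg2_card {K : SimpleGraph V} {x a b : V} (hab : a ≠ b)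
    (hN : ∀ u, K.Adj x u ↔ u = a ∨ u = b) :
    (deficiencyFinset K x).card = if K.Adj a b then 0 else 1 := by
  rw [deficiency_deg2 hab hN]
  split <;> simp

end Aux4
section Aux5
set_option linter.unusedSectionVars false
variable {V : Type*} [Fintype V] [DecidableEq V]

/-- Eliminating any vertex first is an option. -/
lemma minFillIn_le_elim (K : SimpleGraph V) (y : V) :
    minFillIn K ≤ (deficiencyFinset K y).card + minFillIn (elimG K y) := by
  obtain ⟨M, hM, hfill⟩ := minFillIn_spec (elimG K y)
  have hord : IsOrdering (y :: M.erase y) := by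
    constructor
    · exact List.nodup_cons.2 ⟨hM.1.not_mem_erase, hM.1.erase _⟩
    · intro v
      by_cases hv : v = y
      · simp [hv]
      · exact List.mem_cons.2 (Or.inr (List.mem_erase_of_ne hv |>.2 (hM.2 v)))
  calc minFillIn K ≤ fillList K (y :: M.erase y) := minFillIn_le hord
    _ = (deficiencyFinset K y).card + fillList (elimG K y) (M.erase y) := rfl
    _ = (deficiencyFinset K y).card + fillList (elimG K y) M := by
        rw [fillList_erase_of_isol (isol_elimG_self K y)]
    _ = (deficiencyFinset K y).card + minFillIn (elimG K y) := by rw [hfill]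

/-- The neighbourhood of a degree-2 vertex is preserved by eliminating a
non-neighbour. -/
lemma nbhd_elim {K : SimpleGraph V} {x a b y : V}
    (hN : ∀ u, K.Adj x u ↔ u = a ∨ u = b) (hyx : y ≠ x) (hya : y ≠ a) (hyb : y ≠ b) :
    ∀ u, (elimG K y).Adj x u ↔ u = a ∨ u = b := by
  intro u
  rw [elimG_adj]
  constructor
  · rintro ⟨h1, h2, h3, (h4 | ⟨h4, h5⟩)⟩
    · exact (hN u).1 h4
    · exact absurd ((hN y).1 h4.symm) (by push_neg; exact ⟨hya, hyb⟩)
  · rintro (rfl | rfl)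
    · have ha := (hN u).2 (Or.inl rfl)
      exact ⟨K.ne_of_adj ha, Ne.symm hyx, Ne.symm hya, Or.inl ha⟩
    · have hb := (hN u).2 (Or.inr rfl)
      exact ⟨K.ne_of_adj hb, Ne.symm hyx, Ne.symm hyb, Or.inl hb⟩

lemma deficiency_elim_subset {K : SimpleGraph V} {x y : V}
    (hxy : ¬ K.Adj x y) (hyx : y ≠ x) :
    deficiencyFinset (elimG K x) y ⊆ deficiencyFinset K y := by
  intro e he
  rw [mem_deficiencyFinset] at he ⊢
  obtain ⟨u, v, h1, h2, h3, h4, rfl⟩ := he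
  have hyx' : ¬ K.Adj y x := fun h => hxy h.symm
  have h2' : K.Adj y u := by
    rcases h2.2.2.2 with h | ⟨h, -⟩
    · exact h
    · exact absurd h hxy
  have h3' : K.Adj y v := by
    rcases h3.2.2.2 with h | ⟨h, -⟩
    · exact h
    · exact absurd h hxy
  refine ⟨u, v, h1, h2', h3', ?_, rfl⟩
  intro hK
  exact h4 ⟨h1, h2.2.2.1, h3.2.2.1, Or.inl hK⟩

/-- The exchange inequality for eliminating a non-neighbour `y` of the
degree-2 vertex `x`. -/
lemma diamond_ineq {K : SimpleGraph V} {x a b y : V} (hab : a ≠ b)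
    (hN : ∀ u, K.Adj x u ↔ u = a ∨ u = b) (hyx : y ≠ x) (hya : y ≠ a) (hyb : y ≠ b) :
    (deficiencyFinset K x).card + (deficiencyFinset (elimG K x) y).card ≤
      (deficiencyFinset K y).card + (deficiencyFinset (elimG K y) x).card := by
  have hxy : ¬ K.Adj x y := fun h => by
    rcases (hN y).1 h with rfl | rfl
    · exact hya rfl
    · exact hyb rfl
  have hN' := nbhd_elim hN hyx hya hyb
  have hsub := deficiency_elim_subset hxy hyx
  rw [deficiency_deg2_card hab hN, deficiency_deg2_card hab hN']
  by_cases hAB : K.Adj a b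
  · have hAB' : (elimG K y).Adj a b :=
      ⟨hab, Ne.symm hya, Ne.symm hyb, Or.inl hAB⟩
    rw [if_pos hAB, if_pos hAB']
    have := Finset.card_le_card hsub
    omega
  · rw [if_neg hAB]
    by_cases hAB' : (elimG K y).Adj a b
    · rw [if_pos hAB']
      -- a, b are both neighbours of y; the pair s(a,b) lies in D_K(y) but not in
      -- the deficiency of y in elimG K x.
      have hya' : K.Adj y a := by
        rcases hAB'.2.2.2 with h | ⟨h, h'⟩
        · exact absurd h hAB
        · exact h
      have hyb' : K.Adj y b := by
        rcases hAB'.2.2.2 with h | ⟨h, h'⟩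
        · exact absurd h hAB
        · exact h'
      have hmem : s(a, b) ∈ deficiencyFinset K y :=
        mem_deficiencyFinset.2 ⟨a, b, hab, hya', hyb', hAB, rfl⟩
      have hsub2 : deficiencyFinset (elimG K x) y ⊆ (deficiencyFinset K y).erase s(a, b) := by
        intro e he
        refine Finset.mem_erase.2 ⟨?_, hsub he⟩
        rw [mem_deficiencyFinset] at he
        obtain ⟨u, v, h1, h2, h3, h4, rfl⟩ := he
        intro heq
        have hadj : (elimG K x).Adj u v := by
          rcases Sym2.eq_iff.1 heq with ⟨h5, h6⟩ | ⟨h5, h6⟩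
          · exact ⟨h1, h2.2.2.1, h3.2.2.1,
              Or.inr ⟨(hN u).2 (Or.inl h5), (hN v).2 (Or.inr h6)⟩⟩
          · exact ⟨h1, h2.2.2.1, h3.2.2.1,
              Or.inr ⟨(hN u).2 (Or.inr h5), (hN v).2 (Or.inl h6)⟩⟩
        exact h4 hadj
      have hcard := Finset.card_le_card hsub2
      have hcard2 : ((deficiencyFinset K y).erase s(a, b)).card =
          (deficiencyFinset K y).card - 1 := Finset.card_erase_of_mem hmem
      have hpos : 0 < (deficiencyFinset K y).card := Finset.card_pos.2 ⟨_, hmem⟩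
      omega
    · rw [if_neg hAB']
      have := Finset.card_le_card hsub
      omega

end Aux5
section Aux6
set_option linter.unusedSectionVars false
variable {V : Type*} [Fintype V] [DecidableEq V]

lemma swap_le {K : SimpleGraph V} {x a b : V}
    (hN : ∀ u, K.Adj x u ↔ u = a ∨ u = b) :
    permGraph (Equiv.swap x a) (elimG K x) ≤ elimG K a := by
  have hxa : K.Adj x a := (hN a).2 (Or.inl rfl)
  have hxane : x ≠ a := K.ne_of_adj hxa
  intro u v h
  obtain ⟨h1, h2, h3, h4⟩ := h
  have huv : u ≠ v := fun e => h1 (by rw [e])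
  have hua : u ≠ a := fun e => h2 (by rw [e, Equiv.swap_apply_right])
  have hva : v ≠ a := fun e => h3 (by rw [e, Equiv.swap_apply_right])
  by_cases hux : u = x
  · subst hux
    have hvx : v ≠ u := huv.symm
    have hσv : (Equiv.swap u a) v = v := Equiv.swap_apply_of_ne_of_ne hvx hva
    rw [Equiv.swap_apply_left, hσv] at h4
    refine ⟨huv, hua, hva, ?_⟩
    rcases h4 with h4 | ⟨h4, h5⟩
    · exact Or.inr ⟨hxa.symm, h4⟩
    · exact Or.inl h5
  · by_cases hvx : v = x
    · subst hvx
      have hσu : (Equiv.swap v a) u = u := Equiv.swap_apply_of_ne_of_ne hux hua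
      rw [Equiv.swap_apply_left, hσu] at h4
      refine ⟨huv, hua, hva, ?_⟩
      rcases h4 with h4 | ⟨h4, h5⟩
      · exact Or.inr ⟨h4.symm, hxa.symm⟩
      · exact Or.inl h4.symm
    · have hσu : (Equiv.swap x a) u = u := Equiv.swap_apply_of_ne_of_ne hux hua
      have hσv : (Equiv.swap x a) v = v := Equiv.swap_apply_of_ne_of_ne hvx hva
      rw [hσu, hσv] at h4
      refine ⟨huv, hua, hva, ?_⟩
      rcases h4 with h4 | ⟨h4, h5⟩
      · exact Or.inl h4
      · rcases (hN u).1 h4 with rfl | rfl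
        · exact absurd rfl hua
        · rcases (hN v).1 h5 with rfl | rfl
          · exact absurd rfl hva
          · exact absurd rfl huv

lemma swap_delta_mem {K : SimpleGraph V} {x a b : V}
    (hN : ∀ u, K.Adj x u ↔ u = a ∨ u = b) :
    ∀ e ∈ (elimG K a).edgeFinset \
      (permGraph (Equiv.swap x a) (elimG K x)).edgeFinset,
      e ∈ deficiencyFinset K a ∧ x ∉ e := by
  have hxa : K.Adj x a := (hN a).2 (Or.inl rfl)
  have hxane : x ≠ a := K.ne_of_adj hxa
  intro e he
  rw [Finset.mem_sdiff] at he
  obtain ⟨hmem, hnmem⟩ := he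
  induction e using Sym2.ind with
  | _ u v =>
  rw [mem_edgeFinset_iff] at hmem
  obtain ⟨h1, h2, h3, h4⟩ := hmem
  have hns : ¬ (permGraph (Equiv.swap x a) (elimG K x)).Adj u v := by
    rw [← mem_edgeFinset_iff]; exact hnmem
  have hux : u ≠ x := by
    rintro rfl
    have hvx : v ≠ u := h1.symm
    have hσv : (Equiv.swap u a) v = v := Equiv.swap_apply_of_ne_of_ne hvx h3
    apply hns
    rw [permGraph_adj, Equiv.swap_apply_left, hσv]
    refine ⟨fun e => h3 e.symm, Ne.symm hxane, hvx, ?_⟩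
    rcases h4 with h4 | ⟨h4, h5⟩
    · rcases (hN v).1 h4 with rfl | rfl
      · exact absurd rfl h3
      · exact Or.inr ⟨hxa, h4⟩
    · exact Or.inl h5
  have hvx : v ≠ x := by
    rintro rfl
    have hσu : (Equiv.swap v a) u = u := Equiv.swap_apply_of_ne_of_ne hux h2
    apply hns
    rw [permGraph_adj, Equiv.swap_apply_left, hσu]
    refine ⟨fun e => h2 e, hux, Ne.symm hxane, ?_⟩
    rcases h4 with h4 | ⟨h4, h5⟩
    · rcases (hN u).1 h4.symm with rfl | rfl
      · exact absurd rfl h2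
      · exact Or.inr ⟨h4.symm, hxa⟩
    · exact Or.inl h4.symm
  have hσu : (Equiv.swap x a) u = u := Equiv.swap_apply_of_ne_of_ne hux h2
  have hσv : (Equiv.swap x a) v = v := Equiv.swap_apply_of_ne_of_ne hvx h3
  have hKuv : ¬ K.Adj u v := by
    intro hK
    exact hns (by rw [permGraph_adj, hσu, hσv]; exact ⟨h1, hux, hvx, Or.inl hK⟩)
  have h4' : K.Adj a u ∧ K.Adj a v := by
    rcases h4 with h4 | h4
    · exact absurd h4 hKuv
    · exact h4
  constructor
  · exact mem_deficiencyFinset.2 ⟨u, v, h1, h4'.1, h4'.2, hKuv, rfl⟩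
  · rw [Sym2.mem_iff]
    push_neg
    exact ⟨Ne.symm hux, Ne.symm hvx⟩

lemma swap_delta {K : SimpleGraph V} {x a b : V} (hab : a ≠ b)
    (hN : ∀ u, K.Adj x u ↔ u = a ∨ u = b) (hconn : ConnAvoid K x a b) :
    (deficiencyFinset K x).card +
      ((elimG K a).edgeFinset \
        (permGraph (Equiv.swap x a) (elimG K x)).edgeFinset).card ≤
      (deficiencyFinset K a).card := by
  set Δ := (elimG K a).edgeFinset \
      (permGraph (Equiv.swap x a) (elimG K x)).edgeFinset with hΔ
  have hmem := swap_delta_mem hN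
  have hsub : Δ ⊆ deficiencyFinset K a := fun e he => (hmem e he).1
  rw [deficiency_deg2_card hab hN]
  by_cases hAB : K.Adj a b
  · rw [if_pos hAB]
    simpa using Finset.card_le_card hsub
  · rw [if_neg hAB]
    obtain ⟨p, hp⟩ := hconn
    cases p with
    | nil => exact absurd rfl hab
    | @cons _ q₀ _ h q =>
      have hq₀x : q₀ ≠ x := by
        intro hc
        exact hp (by
          rw [SimpleGraph.Walk.support_cons]
          exact List.mem_cons.2 (Or.inr (hc ▸ q.start_mem_support)))
      have hq₀a : q₀ ≠ a := (K.ne_of_adj h).symm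
      have hq₀b : q₀ ≠ b := by
        rintro rfl
        exact hAB h
      have hnadj : ¬ K.Adj x q₀ := by
        intro hc
        rcases (hN q₀).1 hc with rfl | rfl
        · exact hq₀a rfl
        · exact hq₀b rfl
      have hax : K.Adj a x := ((hN a).2 (Or.inl rfl)).symm
      have he₀ : s(x, q₀) ∈ deficiencyFinset K a :=
        mem_deficiencyFinset.2 ⟨x, q₀, Ne.symm hq₀x, hax, h, hnadj, rfl⟩
      have he₀Δ : s(x, q₀) ∉ Δ := by
        intro hc
        have := (hmem _ hc).2
        simp at this
      have hins : insert (s(x, q₀)) Δ ⊆ deficiencyFinset K a := by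
        intro e he
        rcases Finset.mem_insert.1 he with rfl | he
        · exact he₀
        · exact hsub he
      have := Finset.card_le_card hins
      rw [Finset.card_insert_of_notMem he₀Δ] at this
      omega

lemma neighbor_step {K : SimpleGraph V} {x a b : V} (hab : a ≠ b)
    (hN : ∀ u, K.Adj x u ↔ u = a ∨ u = b) (hconn : ConnAvoid K x a b)
    (M' : List V) (hnd : M'.Nodup) (hxM : x ∈ M')
    (hiso : ∀ v, v ∉ M' → v ≠ a → Isol K v) :
    (deficiencyFinset K x).card + minFillIn (elimG K x) ≤ fillList K (a :: M') := by
  set σ := Equiv.swap x a with hσ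
  set Gs := permGraph σ (elimG K x) with hGs
  have hle : Gs ≤ elimG K a := swap_le hN
  have hmono := fillList_le_of_le hle M'
  have hpad : minFillIn Gs ≤ fillList Gs M' := by
    refine minFillIn_le_fillList_of_pad hnd ?_
    intro v hv
    by_cases hva : v = a
    · subst hva
      intro u hu
      rw [hGs, permGraph_adj, hσ, Equiv.swap_apply_right] at hu
      exact isol_elimG_self K x _ hu
    · have hvK : Isol K v := hiso v hv hva
      have hvx : v ≠ x := fun e => hv (e ▸ hxM)
      intro u hu
      rw [hGs, permGraph_adj, hσ, Equiv.swap_apply_of_ne_of_ne hvx hva] at hu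
      exact isol_elimG K hvK x (σ u) hu
  have hperm : minFillIn Gs = minFillIn (elimG K x) := permGraph_minFillIn σ _
  have hdelta := swap_delta hab hN hconn
  rw [← hσ, ← hGs] at hdelta
  rw [fillList_cons]
  rw [hperm] at hpad
  omega

/-- Main induction: any elimination of a list covering all non-isolated vertices
costs at least the deficiency of the degree-2 vertex `x` plus the minimum
fill-in of the elimination graph. -/
lemma main_ineq :
    ∀ (M : List V) (K : SimpleGraph V) (x a b : V), a ≠ b →
    (∀ u, K.Adj x u ↔ u = a ∨ u = b) → ConnAvoid K x a b → M.Nodup → x ∈ M →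
    (∀ v, v ∉ M → Isol K v) →
    (deficiencyFinset K x).card + minFillIn (elimG K x) ≤ fillList K M := by
  intro M
  induction M with
  | nil => intro K x a b _ _ _ _ hxM _; exact absurd hxM List.not_mem_nil
  | cons y M' ih =>
    intro K x a b hab hN hconn hnd hxM hiso
    by_cases hyx : y = x
    · subst hyx
      rw [fillList_cons]
      have hpad : minFillIn (elimG K y) ≤ fillList (elimG K y) M' := by
        refine minFillIn_le_fillList_of_pad (List.nodup_cons.1 hnd).2 ?_
        intro v hv
        by_cases hvy : v = y
        · subst hvy; exact isol_elimG_self K v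
        · have hvM : v ∉ y :: M' := by
            simp only [List.mem_cons]; push_neg; exact ⟨hvy, hv⟩
          exact isol_elimG K (hiso v hvM) y
      omega
    · have hxM' : x ∈ M' := by
        rcases List.mem_cons.1 hxM with h | h
        · exact absurd h.symm hyx
        · exact h
      by_cases hya : y = a
      · subst hya
        exact neighbor_step hab hN hconn M' (List.nodup_cons.1 hnd).2 hxM'
          (fun v hv hvy => hiso v (by
            simp only [List.mem_cons]; push_neg; exact ⟨hvy, hv⟩))
      · by_cases hyb : y = b
        · subst hyb
          have hN' : ∀ u, K.Adj x u ↔ u = y ∨ u = a := by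
            intro u; rw [hN u, or_comm]
          exact neighbor_step hab.symm hN' (connAvoid_symm hconn) M'
            (List.nodup_cons.1 hnd).2 hxM'
            (fun v hv hvy => hiso v (by
              simp only [List.mem_cons]; push_neg; exact ⟨hvy, hv⟩))
        · -- non-neighbour elimination
          have hN' := nbhd_elim hN hyx hya hyb
          have hconn' := connAvoid_elimG hconn (y := y) hya hyb
          have hihres := ih (elimG K y) x a b hab hN' hconn'
            (List.nodup_cons.1 hnd).2 hxM'
            (by
              intro v hv
              by_cases hvy : v = y
              · subst hvy; exact isol_elimG_self K v
              · exact isol_elimG K (hiso v (by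
                  simp only [List.mem_cons]; push_neg; exact ⟨hvy, hv⟩)) y)
          have hdiam := diamond_ineq hab hN hyx hya hyb
          have hstep := minFillIn_le_elim (elimG K x) y
          have hcomm : elimG (elimG K x) y = elimG (elimG K y) x := elimG_comm K y x
          rw [hcomm] at hstep
          rw [fillList_cons]
          omega

end Aux6
/-- if a degree-2 vertex `x` lies on a cycle of `G`, then eliminating
`x` first extends to a minimum fill-in ordering: `Φ(G) = |D_G(x)| + Φ(G_x)`. -/
theorem stmt_17 (G : SimpleGraph V) (x : V)
    (hdeg : G.degree x = 2)
    (hcyc : ∃ w : G.Walk x x, w.IsCycle) :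
    minFillIn G = (deficiencyFinset G x).card + minFillIn (elimG G x) := by
  refine le_antisymm (minFillIn_le_elim G x) ?_
  obtain ⟨a, b, hab, hN⟩ := degree_two_neighbors hdeg
  obtain ⟨w, hw⟩ := hcyc
  obtain ⟨u, v, huv, hxu, hxv, hconn⟩ := cycle_extract w hw
  have hN' : ∀ z, G.Adj x z ↔ z = u ∨ z = v := by
    rcases (hN u).1 hxu with h1 | h1 <;> rcases (hN v).1 hxv with h2 | h2
    · exact absurd (h1.trans h2.symm) huv
    · intro z; rw [hN z, ← h1, ← h2]
    · intro z; rw [hN z, ← h1, ← h2, or_comm]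
    · exact absurd (h1.trans h2.symm) huv
  obtain ⟨L, hL, hfill⟩ := minFillIn_spec G
  have := main_ineq L G x u v huv hN' hconn hL.1 (hL.2 x)
    (fun z hz => absurd (hL.2 z) hz)
  omega
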